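/- arXiv:0907.2766 — 3 statements merged into one kernel-verified Lean document; each statement's English description precedes it below -/
import Mathlib

section
/- Let p be prime and G ≅ C_{p^η} a cyclic group of prime power order. A zero-sum multiset [c_1,...,c_k] over G such that no proper nonempty submultiset sums to zero has length at most p^η. -/
lemma aux_zero_sum_infix (n : ℕ) [NeZero n] (L : List (ZMod n)) (hlen : n < L.length) :
    ∃ i j : ℕ, i < j ∧ j ≤ n ∧ ((L.drop i).take (j - i)).sum = 0 := by
  have hcard : Fintype.card (ZMod n) < Fintype.card (Fin (n + 1)) := by
    simp [ZMod.card]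
  obtain ⟨a, b, hab, hfeq⟩ :=
    Fintype.exists_ne_map_eq_of_card_lt
      (fun i : Fin (n + 1) => ((L.take i).sum : ZMod n)) hcard
  rcases lt_trichotomy (a : ℕ) (b : ℕ) with hlt | heq | hgt
  · refine ⟨a, b, hlt, Nat.le_of_lt_succ b.isLt, ?_⟩
    have hsplit : L.take b = L.take a ++ (L.drop a).take (b - a) := by
      rw [← List.take_add]; congr 1; omega
    have h2 : (L.take a).sum + ((L.drop a).take ((b:ℕ) - a)).sum = (L.take b).sum := by
      rw [hsplit, List.sum_append]
    have h3 : (L.take a).sum + ((L.drop a).take ((b:ℕ) - a)).sum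
        = (L.take a).sum + 0 := by rw [h2, ← hfeq, add_zero]
    exact add_left_cancel h3
  · exact absurd (Fin.ext heq) hab
  · refine ⟨b, a, hgt, Nat.le_of_lt_succ a.isLt, ?_⟩
    have hsplit : L.take a = L.take b ++ (L.drop b).take (a - b) := by
      rw [← List.take_add]; congr 1; omega
    have h2 : (L.take b).sum + ((L.drop b).take ((a:ℕ) - b)).sum = (L.take a).sum := by
      rw [hsplit, List.sum_append]
    have h3 : (L.take b).sum + ((L.drop b).take ((a:ℕ) - b)).sum
        = (L.take b).sum + 0 := by rw [h2, hfeq, add_zero]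
    exact add_left_cancel h3

/-- A minimal zero-sum multiset over a cyclic group of prime-power order `p^η`
has length at most `p^η` (Davenport constant bound for cyclic `p`-groups). -/
theorem stmt_2 (p : ℕ) (hp : p.Prime) (η : ℕ)
    (S : Multiset (ZMod (p ^ η))) (hsum : S.sum = 0)
    (hmin : ∀ T : Multiset (ZMod (p ^ η)), T ≤ S → T ≠ 0 → T ≠ S → T.sum ≠ 0) :
    Multiset.card S ≤ p ^ η := by
  haveI : NeZero (p ^ η) := ⟨pow_ne_zero _ hp.pos.ne'⟩
  by_contra h
  push_neg at h
  obtain ⟨L, rfl⟩ := S.exists_rep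
  have hlen : p ^ η < L.length := by simpa using h
  obtain ⟨i, j, hij, hjn, hzero⟩ := aux_zero_sum_infix (p ^ η) L hlen
  set Tl : List (ZMod (p ^ η)) := (L.drop i).take (j - i) with hTl
  have hsub : Tl.Sublist L := (List.take_sublist _ _).trans (List.drop_sublist _ _)
  have hTlen : Tl.length = j - i := by
    rw [hTl, List.length_take, List.length_drop]
    omega
  refine hmin (Tl : Multiset (ZMod (p ^ η))) hsub.subperm ?_ ?_ (by simpa using hzero)
  · intro h0
    have : Tl.length = 0 := by
      simpa using congrArg Multiset.card h0
    omega
  · intro hE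
    have : Tl.length = L.length := by
      simpa using congrArg Multiset.card hE
    omega
end

section
/- Let R be a commutative local PID with maximal ideal (π) and residue field of size q < ∞. For M, N ∈ GL_n(Frac R) ∩ M_n(R) with elementary divisor valuation tuples ê(M) and ê(N) (each weakly increasing in ℕ^n), the product MN has elementary divisor valuations ê(MN) satisfying ê_i(MN) ≥ ê_1(M) + ê_i(N) for all i, and Σ_i ê_i(MN) = Σ_i ê_i(M) + Σ_i ê_i(N). -/
/-- `e` is the (weakly increasing) tuple of elementary divisor valuations of `M`:
there is a Smith normal form `U * M * V = diag(π^{e 0}, …, π^{e (n-1)})` with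
`U, V ∈ GL_n(R)`. -/
def IsSNFVal {R : Type*} [CommRing R] (π : R) {n : ℕ}
    (M : Matrix (Fin n) (Fin n) R) (e : Fin n → ℕ) : Prop :=
  Monotone e ∧ ∃ U V : Matrix (Fin n) (Fin n) R, IsUnit U.det ∧ IsUnit V.det ∧
    U * M * V = Matrix.diagonal fun i => π ^ (e i)

open Matrix Finset

lemma sum_trunc {R : Type*} [CommRing R] {n m : ℕ} (hm1 : m + 1 ≤ n)
    (F : Fin n → R) (hF : ∀ k : Fin n, m ≤ (k : ℕ) → F k = 0) :
    ∑ k : Fin n, F k = ∑ k : Fin (m+1), F (Fin.castLE hm1 k) := by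
  have h1 : ∑ k : Fin n, F k
      = ∑ k ∈ Finset.univ.map ⟨Fin.castLE hm1, Fin.castLE_injective hm1⟩, F k := by
    refine (Finset.sum_subset (Finset.subset_univ _) ?_).symm
    intro k _ hk
    apply hF
    by_contra hc
    push_neg at hc
    exact hk (Finset.mem_map.mpr ⟨⟨(k : ℕ), by omega⟩, Finset.mem_univ _, by
      simp [Fin.castLE, Fin.ext_iff]⟩)
  rw [h1, Finset.sum_map]
  simp [Function.Embedding.coeFn_mk]

lemma core_snf {R : Type*} [CommRing R] [IsDomain R] (π : R) (hπ : Irreducible π)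
    {n : ℕ} (A B : Matrix (Fin n) (Fin n) R) (f g : Fin n → ℕ)
    (hf : Monotone f) (hg : Monotone g)
    (h : A * Matrix.diagonal (fun k => π ^ g k) * B = Matrix.diagonal fun k => π ^ f k)
    (i : Fin n) : g i ≤ f i := by
  by_contra hlt
  push_neg at hlt
  set t := g i with ht
  set m := (i : ℕ) with hmdef
  have hm1 : m + 1 ≤ n := i.isLt
  set emb := Fin.castLE hm1 with hemb
  have hfle : ∀ j : Fin (m+1), f (emb j) + (t - 1 - f (emb j)) = t - 1 := by
    intro j
    have h1 : emb j ≤ i := by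
      simp only [Fin.le_def, hemb, Fin.coe_castLE]; omega
    have := hf h1
    omega
  have hE : ∀ a b : Fin n, (∑ k, (A a k * π ^ g k) * B k b)
      = if a = b then π ^ f a else 0 := by
    intro a b
    have := congrFun (congrFun h a) b
    simpa [Matrix.mul_apply, Matrix.mul_diagonal, Matrix.diagonal_apply] using this
  set P : Matrix (Fin (m+1)) (Fin n) R :=
    Matrix.of (fun a k => if (k : ℕ) < m then A (emb a) k * π ^ g k else 0) with hP
  set Q : Matrix (Fin n) (Fin (m+1)) R :=
    Matrix.of (fun k j => π ^ (t - 1 - f (emb j)) * B k (emb j)) with hQ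
  set W : Matrix (Fin (m+1)) (Fin (m+1)) R :=
    Matrix.of (fun a j => ∑ k : Fin n, if (k : ℕ) < m then 0 else
      π ^ (g k - t) * A (emb a) k * (π ^ (t - 1 - f (emb j)) * B k (emb j))) with hW
  have claim1 : P * Q = (π ^ (t-1)) • ((1 : Matrix (Fin (m+1)) (Fin (m+1)) R) - π • W) := by
    ext a j
    have key : (P * Q) a j + π ^ t * W a j = if a = j then π ^ (t-1) else 0 := by
      rw [Matrix.mul_apply, hW]
      simp only [Matrix.of_apply]
      rw [Finset.mul_sum, ← Finset.sum_add_distrib]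
      have : ∀ k : Fin n, P a k * Q k j
          + π ^ t * (if (k : ℕ) < m then 0 else
            π ^ (g k - t) * A (emb a) k * (π ^ (t - 1 - f (emb j)) * B k (emb j)))
          = π ^ (t - 1 - f (emb j)) * ((A (emb a) k * π ^ g k) * B k (emb j)) := by
        intro k
        by_cases hk : (k : ℕ) < m
        · simp only [hP, hQ, Matrix.of_apply, if_pos hk]
          ring
        · simp only [hP, hQ, Matrix.of_apply, if_neg hk]
          have hgk : t ≤ g k := by
            apply hg
            simp only [Fin.le_def]; omega
          have : π ^ t * π ^ (g k - t) = π ^ g k := by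
            rw [← pow_add]; congr 1; omega
          rw [zero_mul, zero_add, ← this]
          ring
      rw [Finset.sum_congr rfl (fun k _ => this k), ← Finset.mul_sum, hE]
      by_cases hab : emb a = emb j
      · have : a = j := Fin.castLE_injective hm1 hab
        subst this
        rw [if_pos rfl, if_pos rfl, ← pow_add]
        congr 1
        have := hfle a
        omega
      · rw [if_neg hab, if_neg (fun hc => hab (by rw [hc])), mul_zero]
    have ht1 : π ^ (t-1) * π = π ^ t := by
      rw [← pow_succ]; congr 1; omega
    simp only [Matrix.smul_apply, Matrix.sub_apply, Matrix.one_apply, smul_eq_mul]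
    rw [mul_sub]
    have : π ^ (t-1) * (π * W a j) = π ^ t * W a j := by rw [← mul_assoc, ht1]
    rw [this, eq_sub_iff_add_eq, key]
    by_cases hab : a = j <;> simp [hab]
  -- det (P*Q) = 0
  have hdet0 : (P * Q).det = 0 := by
    set P2 : Matrix (Fin (m+1)) (Fin (m+1)) R := Matrix.of (fun a k => P a (emb k)) with hP2
    set Q2 : Matrix (Fin (m+1)) (Fin (m+1)) R := Matrix.of (fun k j => Q (emb k) j) with hQ2
    have : P * Q = P2 * Q2 := by
      ext a j
      rw [Matrix.mul_apply, Matrix.mul_apply]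
      exact sum_trunc hm1 (fun k => P a k * Q k j) (fun k hk => by
        simp only [hP, Matrix.of_apply, if_neg (by omega : ¬ (k:ℕ) < m), zero_mul])
    rw [this, Matrix.det_mul]
    have : P2.det = 0 := Matrix.det_eq_zero_of_column_eq_zero (Fin.last m) (fun a => by
      simp only [hP2, hP, Matrix.of_apply]
      rw [if_neg]
      simp [hemb, Fin.last])
    rw [this, zero_mul]
  -- det (1 - π • W) = 1 + c * π
  obtain ⟨c, hc⟩ : ∃ c, c * π = ((1 : Matrix (Fin (m+1)) (Fin (m+1)) R) - π • W).det - 1 := by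
    rw [← Ideal.mem_span_singleton']
    rw [← Ideal.Quotient.eq_zero_iff_mem, map_sub, RingHom.map_one]
    set φ := Ideal.Quotient.mk (Ideal.span {π}) with hφ
    have hφπ : φ π = 0 := by
      rw [hφ, Ideal.Quotient.eq_zero_iff_mem]
      exact Ideal.mem_span_singleton_self π
    rw [RingHom.map_det]
    have : ((1 : Matrix (Fin (m+1)) (Fin (m+1)) R) - π • W).map φ = 1 := by
      ext a j
      simp only [Matrix.map_apply, Matrix.sub_apply, Matrix.smul_apply, smul_eq_mul,
        map_sub, _root_.map_mul, hφπ, zero_mul, sub_zero, Matrix.one_apply]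
      split <;> simp
    rw [RingHom.mapMatrix_apply, this, Matrix.det_one, sub_self]
  have hfin : (π ^ (t-1)) ^ (Fintype.card (Fin (m+1)))
      * ((1 : Matrix (Fin (m+1)) (Fin (m+1)) R) - π • W).det = 0 := by
    rw [← Matrix.det_smul, ← claim1]
    exact hdet0
  rw [mul_eq_zero] at hfin
  rcases hfin with h1 | h2
  · exact pow_ne_zero _ (pow_ne_zero _ hπ.ne_zero) h1
  · rw [h2] at hc
    have : π * (-c) = 1 := by linear_combination -hc
    exact hπ.not_isUnit (IsUnit.of_mul_eq_one (-c) this)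

lemma snf_det {R : Type*} [CommRing R] {n : ℕ} (π : R) {X : Matrix (Fin n) (Fin n) R}
    {e : Fin n → ℕ} (h : IsSNFVal π X e) :
    ∃ u : Rˣ, (u : R) * X.det = π ^ (∑ i, e i) := by
  obtain ⟨-, U, V, hU, hV, hEq⟩ := h
  refine ⟨hU.unit * hV.unit, ?_⟩
  have hd := congrArg Matrix.det hEq
  rw [Matrix.det_mul, Matrix.det_mul, Matrix.det_diagonal,
    Finset.prod_pow_eq_pow_sum] at hd
  rw [Units.val_mul, IsUnit.unit_spec, IsUnit.unit_spec]
  linear_combination hd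

/-- Over a local PID (DVR) `R` with maximal ideal `(π)` and finite residue field
of size `q`, for integral matrices `M`, `N` invertible over `Frac R`, the
elementary divisor valuations of the product satisfy
`ê₁(M) + êᵢ(N) ≤ êᵢ(MN)` and `Σ êᵢ(MN) = Σ êᵢ(M) + Σ êᵢ(N)`. -/
theorem stmt_6 (R : Type*) [CommRing R] [IsDomain R] [IsDiscreteValuationRing R]
    (π : R) (hπ : Irreducible π) (q : ℕ)
    (hq : Nat.card (IsLocalRing.ResidueField R) = q) (hqfin : 0 < q)
    (n : ℕ) (hn : 0 < n) (M N : Matrix (Fin n) (Fin n) R)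
    (hM : M.det ≠ 0) (hN : N.det ≠ 0)
    (eM eN eP : Fin n → ℕ)
    (hMe : IsSNFVal π M eM) (hNe : IsSNFVal π N eN) (hPe : IsSNFVal π (M * N) eP) :
    (∀ i : Fin n, eM ⟨0, hn⟩ + eN i ≤ eP i) ∧
    (∑ i, eP i = ∑ i, eM i + ∑ i, eN i) := by
  constructor
  · obtain ⟨hmM, UM, VM, hUM, hVM, hMq⟩ := hMe
    obtain ⟨hmN, UN, VN, hUN, hVN, hNq⟩ := hNe
    obtain ⟨hmP, UP, VP, hUP, hVP, hPq⟩ := hPe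
    haveI iUM := Matrix.invertibleOfIsUnitDet UM hUM
    haveI iVM := Matrix.invertibleOfIsUnitDet VM hVM
    haveI iUN := Matrix.invertibleOfIsUnitDet UN hUN
    haveI iVN := Matrix.invertibleOfIsUnitDet VN hVN
    set e0 := eM ⟨0, hn⟩ with he0
    have cancel : ∀ (U V X : Matrix (Fin n) (Fin n) R) (_ : Invertible U) (_ : Invertible V),
        ⅟U * (U * X * V) * ⅟V = X := by
      intro U V X hU hV
      rw [Matrix.mul_assoc (⅟U), Matrix.mul_assoc (U * X), mul_invOf_self, Matrix.mul_one,
        ← Matrix.mul_assoc, invOf_mul_self, Matrix.one_mul]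
    have hM' : M = ⅟UM * Matrix.diagonal (fun k => π ^ eM k) * ⅟VM := by
      rw [← hMq, cancel UM VM M iUM iVM]
    have hN' : N = ⅟UN * Matrix.diagonal (fun k => π ^ eN k) * ⅟VN := by
      rw [← hNq, cancel UN VN N iUN iVN]
    have hdiagM : Matrix.diagonal (fun k => π ^ eM k)
        = (π ^ e0) • Matrix.diagonal (fun k => π ^ (eM k - e0)) := by
      ext a b
      by_cases hab : a = b
      · subst hab
        simp only [Matrix.diagonal_apply_eq, Matrix.smul_apply, smul_eq_mul, ← pow_add]
        congr 1
        have h0 : (⟨0, hn⟩ : Fin n) ≤ a := by simp [Fin.le_def]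
        have := hmM h0
        omega
      · simp [Matrix.diagonal_apply_ne _ hab]
    have hdiagG : Matrix.diagonal (fun k => π ^ (e0 + eN k))
        = (π ^ e0) • Matrix.diagonal (fun k => π ^ eN k) := by
      ext a b
      by_cases hab : a = b
      · subst hab
        simp [Matrix.diagonal_apply_eq, smul_eq_mul, pow_add]
      · simp [Matrix.diagonal_apply_ne _ hab]
    have hM'' : M = (π ^ e0) •
        (⅟UM * Matrix.diagonal (fun k => π ^ (eM k - e0)) * ⅟VM) := by
      rw [hM', hdiagM, Matrix.mul_smul, Matrix.smul_mul]
    have key : (UP * ⅟UM * Matrix.diagonal (fun k => π ^ (eM k - e0)) * ⅟VM * ⅟UN)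
        * Matrix.diagonal (fun k => π ^ (e0 + eN k)) * (⅟VN * VP)
        = Matrix.diagonal (fun k => π ^ eP k) := by
      rw [← hPq, hdiagG, hM'', hN']
      simp only [Matrix.mul_smul, Matrix.smul_mul, Matrix.mul_assoc]
    intro i
    exact core_snf π hπ _ _ eP (fun k => e0 + eN k) hmP
      (fun a b hab => Nat.add_le_add_left (hmN hab) e0) key i
  · obtain ⟨uM, huM⟩ := snf_det π hMe
    obtain ⟨uN, huN⟩ := snf_det π hNe
    obtain ⟨uP, huP⟩ := snf_det π hPe
    rw [Matrix.det_mul] at huP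
    have hinv : ((uP⁻¹ : Rˣ) : R) * (uP : R) = 1 := by
      rw [← Units.val_mul, inv_mul_cancel, Units.val_one]
    have hgoal : ((uM * uN * uP⁻¹ : Rˣ) : R) * π ^ (∑ i, eP i)
        = ((1 : Rˣ) : R) * π ^ (∑ i, eM i + ∑ i, eN i) := by
      rw [pow_add, Units.val_mul, Units.val_mul, Units.val_one, one_mul]
      linear_combination (-(((uM : R)) * (uN : R) * ((uP⁻¹ : Rˣ) : R))) * huP
        + ((uM : R) * (uN : R) * M.det * N.det) * hinv
        + ((uN : R) * N.det) * huM + (π ^ (∑ i, eM i)) * huN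
    exact IsDiscreteValuationRing.unit_mul_pow_congr_pow hπ hπ _ 1 _ _ hgoal
end

section
/- For a 2n×2n matrix M over a discrete valuation ring R satisfying MᵗJM = π^l·u·J with u a unit and J the standard symplectic matrix, the elementary divisor valuations satisfy ê_i(M) + ê_{2n+1-i}(M) = l for all 1 ≤ i ≤ 2n. -/
open Matrix

namespace SNFAux
open Finset

variable {R : Type*} [CommRing R] {N : ℕ}

/-- Ideal generated by `k × k` minors. -/
def mIdeal (k : ℕ) {N : ℕ} (M : Matrix (Fin N) (Fin N) R) : Ideal R :=
  Ideal.span {x | ∃ f g : Fin k → Fin N, x = (M.submatrix f g).det}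

lemma det_submatrix_mem (k : ℕ) (M : Matrix (Fin N) (Fin N) R) (f g : Fin k → Fin N) :
    (M.submatrix f g).det ∈ mIdeal k M :=
  Ideal.subset_span ⟨f, g, rfl⟩

lemma mIdeal_mul_le_right (k : ℕ) (A B : Matrix (Fin N) (Fin N) R) :
    mIdeal k (A * B) ≤ mIdeal k B := by
  rw [mIdeal, Ideal.span_le]
  rintro x ⟨f, g, rfl⟩
  have hrow : ((A * B).submatrix f g) =
      fun i => ∑ t : Fin N, A (f i) t • (B.submatrix id g) t := by
    funext i j
    simp [Matrix.mul_apply, Matrix.submatrix_apply, Finset.sum_apply, smul_eq_mul]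
  have hdet : ((A * B).submatrix f g).det
      = Matrix.detRowAlternating ((A * B).submatrix f g) := rfl
  rw [hdet, hrow, ← AlternatingMap.coe_multilinearMap, MultilinearMap.map_sum]
  refine Submodule.sum_mem _ fun r _ => ?_
  have : (Matrix.detRowAlternating.toMultilinearMap
        fun i => A (f i) (r i) • (B.submatrix id g) (r i))
      = (∏ i, A (f i) (r i)) • (B.submatrix r g).det := by
    rw [MultilinearMap.map_smul_univ]
    rfl
  rw [this, smul_eq_mul]
  exact Ideal.mul_mem_left _ _ (det_submatrix_mem k B r g)

lemma mIdeal_transpose (k : ℕ) (M : Matrix (Fin N) (Fin N) R) :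
    mIdeal k Mᵀ = mIdeal k M := by
  unfold mIdeal
  congr 1
  ext x
  constructor
  · rintro ⟨f, g, rfl⟩
    exact ⟨g, f, by rw [← Matrix.transpose_submatrix, Matrix.det_transpose]⟩
  · rintro ⟨f, g, rfl⟩
    exact ⟨g, f, by rw [← Matrix.transpose_submatrix, Matrix.det_transpose]⟩

lemma mIdeal_mul_le_left (k : ℕ) (A B : Matrix (Fin N) (Fin N) R) :
    mIdeal k (A * B) ≤ mIdeal k A := by
  rw [← mIdeal_transpose k (A * B), Matrix.transpose_mul, ← mIdeal_transpose k A]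
  exact mIdeal_mul_le_right k _ _

lemma mIdeal_unit_congr (k : ℕ) (A M B : Matrix (Fin N) (Fin N) R)
    (hA : IsUnit A.det) (hB : IsUnit B.det) :
    mIdeal k (A * M * B) = mIdeal k M := by
  refine le_antisymm ?_ ?_
  · exact le_trans (mIdeal_mul_le_left k _ _) (mIdeal_mul_le_right k _ _)
  · have : M = A⁻¹ * (A * M * B) * B⁻¹ := by
      have e1 : A⁻¹ * (A * M * B) * B⁻¹ = A⁻¹ * A * (M * (B * B⁻¹)) := by
        simp only [Matrix.mul_assoc]
      rw [e1, Matrix.nonsing_inv_mul _ hA, Matrix.mul_nonsing_inv _ hB,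
        Matrix.one_mul, Matrix.mul_one]
    nth_rewrite 1 [this]
    exact le_trans (mIdeal_mul_le_left k _ _) (mIdeal_mul_le_right k _ _)


lemma strictMono_le_val {k N : ℕ} {g : Fin k → Fin N} (hg : StrictMono g) (i : Fin k) :
    (i : ℕ) ≤ (g i : ℕ) := by
  have H : ∀ m : ℕ, ∀ i : Fin k, i.val = m → m ≤ (g i).val := by
    intro m
    induction m with
    | zero => intro i _; exact Nat.zero_le _
    | succ j ih =>
      intro i hi
      have hik := i.isLt
      have hj : j < k := by omega
      have h1 := ih ⟨j, hj⟩ rfl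
      have h2 : g ⟨j, hj⟩ < g i := hg (by simp [Fin.lt_def, hi])
      have h3 := Fin.lt_def.mp h2
      omega
  exact H i.val i rfl

lemma sum_mono_le {N : ℕ} {e : Fin N → ℕ} (he : Monotone e) {k : ℕ} (hk : k ≤ N)
    (f : Fin k → Fin N) (hf : Function.Injective f) :
    ∑ i : Fin k, e (Fin.castLE hk i) ≤ ∑ i : Fin k, e (f i) := by
  classical
  set S : Finset (Fin N) := Finset.image f Finset.univ with hS
  have hcard : S.card = k := by
    rw [hS, Finset.card_image_of_injective _ hf, Finset.card_univ, Fintype.card_fin]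
  have h1 : ∑ x ∈ S, e x = ∑ i : Fin k, e (f i) :=
    Finset.sum_image (fun x _ y _ h => hf h)
  have himg : Finset.image (S.orderEmbOfFin hcard) Finset.univ = S := by
    apply Finset.coe_injective
    rw [Finset.coe_image, Finset.coe_univ, Set.image_univ, Finset.range_orderEmbOfFin]
  have h2 : ∑ x ∈ S, e x = ∑ i : Fin k, e (S.orderEmbOfFin hcard i) := by
    conv_lhs => rw [← himg]
    exact Finset.sum_image (fun x _ y _ h => (S.orderEmbOfFin hcard).injective h)
  rw [← h1, h2]
  refine Finset.sum_le_sum fun i _ => he ?_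
  rw [Fin.le_def]
  exact strictMono_le_val (S.orderEmbOfFin hcard).strictMono i

lemma submatrix_diagonal_det {d : Fin N → R} {k : ℕ} (f : Fin k → Fin N)
    (hf : Function.Injective f) :
    ((Matrix.diagonal d).submatrix f f).det = ∏ i, d (f i) := by
  have h : (Matrix.diagonal d).submatrix f f = Matrix.diagonal (fun i => d (f i)) := by
    ext i j
    by_cases h : i = j
    · subst h; simp
    · rw [Matrix.submatrix_apply, Matrix.diagonal_apply_ne _ (fun hc => h (hf hc)),
        Matrix.diagonal_apply_ne _ h]
  rw [h, Matrix.det_diagonal]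


lemma mIdeal_diagonal_le (d : Fin N → R) (k : ℕ) (x : R)
    (h : ∀ f : Fin k → Fin N, Function.Injective f → x ∣ ∏ i, d (f i)) :
    mIdeal k (Matrix.diagonal d) ≤ Ideal.span {x} := by
  rw [mIdeal, Ideal.span_le]
  rintro y ⟨f, g, rfl⟩
  rw [SetLike.mem_coe, Ideal.mem_span_singleton]
  by_cases hf : Function.Injective f
  · rw [Matrix.det_apply]
    refine Finset.dvd_sum fun σ _ => ?_
    have hdvd : x ∣ ∏ i, ((Matrix.diagonal d).submatrix f g) (σ i) i := by
      by_cases hall : ∀ i, f (σ i) = g i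
      · have hp : ∏ i, ((Matrix.diagonal d).submatrix f g) (σ i) i
            = ∏ i, d (f (σ i)) := by
          refine Finset.prod_congr rfl fun i _ => ?_
          rw [Matrix.submatrix_apply, ← hall i, Matrix.diagonal_apply_eq]
        rw [hp, Equiv.prod_comp σ (fun j => d (f j))]
        exact h f hf
      · push_neg at hall
        obtain ⟨i, hi⟩ := hall
        have hz : ((Matrix.diagonal d).submatrix f g) (σ i) i = 0 := by
          rw [Matrix.submatrix_apply, Matrix.diagonal_apply_ne _ hi]
        rw [Finset.prod_eq_zero (f := fun j => ((Matrix.diagonal d).submatrix f g) (σ j) j)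
          (Finset.mem_univ i) hz]
        exact dvd_zero x
    rw [Units.smul_def, zsmul_eq_mul]
    exact hdvd.mul_left _
  · obtain ⟨i, j, hij, hne⟩ := Function.not_injective_iff.mp hf
    have hrow : ((Matrix.diagonal d).submatrix f g) i
        = ((Matrix.diagonal d).submatrix f g) j := by
      funext jj
      simp [Matrix.submatrix_apply, hij]
    rw [Matrix.det_zero_of_row_eq hne hrow]
    exact dvd_zero x


lemma span_pow_eq {π : R} [IsDomain R] (hπ : Irreducible π) {a b : ℕ}
    (h : Ideal.span {π ^ a} = Ideal.span {π ^ b}) : a = b := by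
  rw [Ideal.span_singleton_eq_span_singleton] at h
  have h1 := h.dvd
  have h2 := h.symm.dvd
  rw [pow_dvd_pow_iff hπ.ne_zero hπ.not_isUnit] at h1 h2
  omega

lemma mIdeal_diagonal_unitpow {π : R} (w : Rˣ) (E : Fin N → ℕ) (hE : Monotone E)
    (τ : Equiv.Perm (Fin N)) (k : ℕ) (hk : k ≤ N) :
    mIdeal k (Matrix.diagonal fun i => π ^ E (τ i) * (w : R)) =
      Ideal.span {π ^ ∑ i : Fin k, E (Fin.castLE hk i)} := by
  set d : Fin N → R := fun i => π ^ E (τ i) * (w : R) with hd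
  have hprod : ∀ f : Fin k → Fin N,
      ∏ i, d (f i) = π ^ (∑ i, E (τ (f i))) * (w : R) ^ k := by
    intro f
    rw [hd]
    rw [Finset.prod_mul_distrib, Finset.prod_const, Finset.card_univ, Fintype.card_fin,
      Finset.prod_pow_eq_pow_sum]
  refine le_antisymm ?_ ?_
  · apply mIdeal_diagonal_le
    intro f hf
    rw [hprod f]
    refine Dvd.dvd.mul_right (pow_dvd_pow π ?_) _
    exact sum_mono_le hE hk (fun i => τ (f i)) (τ.injective.comp hf)
  · rw [Ideal.span_singleton_le_iff_mem]
    set f : Fin k → Fin N := fun i => τ.symm (Fin.castLE hk i) with hf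
    have hfinj : Function.Injective f := τ.symm.injective.comp (Fin.castLE_injective hk)
    have h1 : ((Matrix.diagonal d).submatrix f f).det = ∏ i, d (f i) :=
      submatrix_diagonal_det f hfinj
    have h2 : ∏ i, d (f i) = π ^ (∑ i, E (Fin.castLE hk i)) * (w : R) ^ k := by
      rw [hprod f]
      simp [hf]
    have hmem : (π ^ (∑ i, E (Fin.castLE hk i)) * (w : R) ^ k)
        ∈ mIdeal k (Matrix.diagonal d) := by
      rw [← h2, ← h1]
      exact det_submatrix_mem k _ f f
    have h3 : π ^ (∑ i, E (Fin.castLE hk i))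
        = π ^ (∑ i, E (Fin.castLE hk i)) * (w : R) ^ k * ((w⁻¹ : Rˣ) : R) ^ k := by
      rw [mul_assoc, ← mul_pow]
      simp
    rw [h3]
    exact Ideal.mul_mem_right _ _ hmem

end SNFAux

open SNFAux

/-- For a `2n × 2n` matrix `M` over a DVR satisfying `Mᵀ J M = π^l u J` with
`u` a unit and `J` the standard symplectic matrix, the elementary divisor
valuations satisfy the symmetry `êᵢ(M) + ê_{2n+1-i}(M) = l` for all `i`. -/
theorem stmt_17 (R : Type*) [CommRing R] [IsDomain R] [IsDiscreteValuationRing R]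
    (π : R) (hπ : Irreducible π) (n : ℕ) (l : ℕ) (u : Rˣ)
    (M : Matrix (Fin (n + n)) (Fin (n + n)) R)
    (hsymp : Mᵀ * ((Matrix.fromBlocks 0 1 (-1) 0).submatrix
        finSumFinEquiv.symm finSumFinEquiv.symm) * M =
      (π ^ l * (u : R)) • ((Matrix.fromBlocks 0 1 (-1) 0).submatrix
        finSumFinEquiv.symm finSumFinEquiv.symm))
    (e : Fin (n + n) → ℕ) (he : IsSNFVal π M e) :
    ∀ i : Fin (n + n), e i + e i.rev = l := by

  obtain ⟨hmono, U, V, hU, hV, hUMV⟩ := he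
  set Jm : Matrix (Fin (n+n)) (Fin (n+n)) R :=
    (Matrix.fromBlocks 0 1 (-1) 0).submatrix finSumFinEquiv.symm finSumFinEquiv.symm with hJm
  set c : R := π ^ l * (u : R) with hc
  have hJJ : Jm * Jm = -1 := by
    rw [hJm, Matrix.submatrix_mul_equiv]
    have hXX : (Matrix.fromBlocks (0 : Matrix (Fin n) (Fin n) R) 1 (-1) 0) *
        (Matrix.fromBlocks (0 : Matrix (Fin n) (Fin n) R) 1 (-1) 0)
        = (-1 : Matrix (Fin n ⊕ Fin n) (Fin n ⊕ Fin n) R) := by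
      rw [Matrix.fromBlocks_multiply]
      simp [← Matrix.fromBlocks_one, Matrix.fromBlocks_neg]
    rw [hXX]
    simp [Matrix.submatrix_neg, Matrix.submatrix_one_equiv]
  set N₀ : Matrix (Fin (n+n)) (Fin (n+n)) R := -(Jm * Mᵀ * Jm) with hN
  have hNM : N₀ * M = c • 1 := by
    have h1 : N₀ * M = -(Jm * (Mᵀ * Jm * M)) := by
      rw [hN]; simp only [Matrix.neg_mul, Matrix.mul_assoc]
    rw [h1, hsymp, Matrix.mul_smul, hJJ, smul_neg, neg_neg]
  set P : Matrix (Fin (n+n)) (Fin (n+n)) R := V⁻¹ * N₀ * U⁻¹ with hP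
  have hPD : P * Matrix.diagonal (fun i => π ^ e i) = c • 1 := by
    rw [← hUMV, hP]
    have e1 : V⁻¹ * N₀ * U⁻¹ * (U * M * V) = V⁻¹ * (N₀ * ((U⁻¹ * U) * (M * V))) := by
      simp only [Matrix.mul_assoc]
    rw [e1, Matrix.nonsing_inv_mul _ hU, Matrix.one_mul, ← Matrix.mul_assoc N₀ M V,
      hNM, Matrix.smul_mul, Matrix.one_mul, Matrix.mul_smul, Matrix.nonsing_inv_mul _ hV]
  have hent : ∀ i j, P i j * π ^ e j = c * (if i = j then 1 else 0) := by
    intro i j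
    have h0 := congrFun (congrFun hPD i) j
    simpa [Matrix.mul_diagonal, Matrix.one_apply] using h0
  have hle : ∀ j : Fin (n+n), e j ≤ l := by
    intro j
    have h1 : P j j * π ^ e j = c := by simpa using hent j j
    have hdvd : π ^ e j ∣ π ^ l * (u : R) := by
      rw [← hc]; exact Dvd.intro_left (P j j) h1
    have hdvd2 : π ^ e j ∣ π ^ l := (IsUnit.dvd_mul_right u.isUnit).mp hdvd
    exact (pow_dvd_pow_iff hπ.ne_zero hπ.not_isUnit).mp hdvd2
  have hπe : ∀ j : Fin (n+n), (π : R) ^ e j ≠ 0 := fun j => pow_ne_zero _ hπ.ne_zero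
  have hPdiag : P = Matrix.diagonal (fun i => π ^ (l - e i) * (u : R)) := by
    ext i j
    by_cases hij : i = j
    · subst hij
      have h1 : P i i * π ^ e i = c := by simpa using hent i i
      have h2 : (π ^ (l - e i) * (u : R)) * π ^ e i = c := by
        rw [hc, mul_right_comm, ← pow_add, Nat.sub_add_cancel (hle i)]
      rw [Matrix.diagonal_apply_eq]
      exact mul_right_cancel₀ (hπe i) (h1.trans h2.symm)
    · have h1 : P i j * π ^ e j = 0 := by simpa [hij] using hent i j
      have hP0 : P i j = 0 := by
        rcases mul_eq_zero.mp h1 with h | h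
        · exact h
        · exact absurd h (hπe j)
      rw [hP0, Matrix.diagonal_apply_ne _ hij]
  have hN2 : N₀ = V * P * U := by
    rw [hP]
    have e1 : V * (V⁻¹ * N₀ * U⁻¹) * U = V * V⁻¹ * (N₀ * (U⁻¹ * U)) := by
      simp only [Matrix.mul_assoc]
    rw [e1, Matrix.mul_nonsing_inv _ hV, Matrix.nonsing_inv_mul _ hU,
      Matrix.one_mul, Matrix.mul_one]
  have hMT : Mᵀ = (-(Jm * V)) * P * (U * Jm) := by
    have h1 : Jm * N₀ * Jm = -Mᵀ := by
      rw [hN]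
      have e1 : Jm * -(Jm * Mᵀ * Jm) * Jm = -((Jm * Jm) * (Mᵀ * (Jm * Jm))) := by
        simp only [Matrix.mul_neg, Matrix.neg_mul, Matrix.mul_assoc]
      rw [e1, hJJ]
      simp
    have h2 : Mᵀ = -(Jm * N₀ * Jm) := by rw [h1, neg_neg]
    rw [h2, hN2]
    simp only [Matrix.neg_mul, Matrix.mul_neg, Matrix.mul_assoc]
  have hJdet : IsUnit Jm.det :=
    Matrix.isUnit_det_of_right_inverse (B := -Jm) (by rw [Matrix.mul_neg, hJJ, neg_neg])
  have hA : IsUnit ((-(Jm * V)).det) := by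
    rw [Matrix.det_neg, Matrix.det_mul]
    exact ((isUnit_one.neg).pow _).mul (hJdet.mul hV)
  have hB : IsUnit ((U * Jm).det) := by
    rw [Matrix.det_mul]; exact hU.mul hJdet
  have hkey : ∀ k, ∀ hk : k ≤ n + n,
      (∑ j : Fin k, e (Fin.castLE hk j))
        = ∑ j : Fin k, (l - e (Fin.rev (Fin.castLE hk j))) := by
    intro k hk
    apply span_pow_eq hπ
    have hDM : mIdeal k (Matrix.diagonal fun i => π ^ e i) = mIdeal k M := by
      rw [← hUMV]; exact mIdeal_unit_congr k U M V hU hV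
    have hMP : mIdeal k Mᵀ = mIdeal k P := by
      rw [hMT]; exact mIdeal_unit_congr k _ P _ hA hB
    have h1 : mIdeal k (Matrix.diagonal fun i => π ^ e i)
        = Ideal.span {π ^ ∑ j : Fin k, e (Fin.castLE hk j)} := by
      have h := mIdeal_diagonal_unitpow (π := π) 1 e hmono (Equiv.refl _) k hk
      simpa using h
    have hE' : Monotone (fun i : Fin (n+n) => l - e (Fin.rev i)) := by
      intro a b hab
      exact Nat.sub_le_sub_left (hmono (Fin.rev_le_rev.mpr hab)) l
    have h2 : mIdeal k P
        = Ideal.span {π ^ ∑ j : Fin k, (l - e (Fin.rev (Fin.castLE hk j)))} := by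
      rw [hPdiag]
      have h := mIdeal_diagonal_unitpow (π := π) u
        (fun i => l - e (Fin.rev i)) hE' Fin.revPerm k hk
      simpa [Fin.rev_rev] using h
    rw [← h1, hDM, ← mIdeal_transpose k M, hMP, h2]
  intro i
  have hk1 : (i : ℕ) ≤ n + n := le_of_lt i.isLt
  have hk2 : (i : ℕ) + 1 ≤ n + n := i.isLt
  have ha := hkey i.val hk1
  have hb := hkey (i.val + 1) hk2
  rw [Fin.sum_univ_castSucc, Fin.sum_univ_castSucc] at hb
  have hcast : ∀ j : Fin i.val, Fin.castLE hk2 (Fin.castSucc j) = Fin.castLE hk1 j := by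
    intro j; ext; simp
  have hlast : Fin.castLE hk2 (Fin.last i.val) = i := by
    ext; simp
  simp only [hcast, hlast] at hb
  rw [← ha] at hb
  have hei : e i = l - e (Fin.rev i) := by omega
  have := hle (Fin.rev i)
  omega
end
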